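/- For positive reals x ≠ y and positive integers a, b, s, t with b ≥ t ≥ s ≥ a ≥ 2 and C(b−a, 2) < a, one has μ_a · φ_{s,t} > ω_a · ψ_{s,t}, where μ_a = (x+y)^a − x^a − y^a, ω_a = x^a + y^a − 2((x+y)/2)^a, ψ_{s,t} = x^s y^t + x^t y^s, and φ_{s,t} = 2((x+y)/2)^{s+t} − x^s y^t − x^t y^s. -/

import Mathlib

open Real Finset

lemma sinh_lt_mul_cosh {v : ℝ} (hv : 0 < v) : Real.sinh v < v * Real.cosh v := by
  have key : StrictMonoOn (fun v : ℝ => v * Real.cosh v - Real.sinh v) (Set.Ici 0) := by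
    apply strictMonoOn_of_deriv_pos (convex_Ici 0)
    · fun_prop
    · intro x hx
      rw [interior_Ici, Set.mem_Ioi] at hx
      have h : HasDerivAt (fun v : ℝ => v * Real.cosh v - Real.sinh v) (x * Real.sinh x) x := by
        have h1 : HasDerivAt (fun v : ℝ => v * Real.cosh v)
            (1 * Real.cosh x + x * Real.sinh x) x :=
          (hasDerivAt_id x).mul (Real.hasDerivAt_cosh x)
        have h2 : HasDerivAt (fun v : ℝ => v * Real.cosh v - Real.sinh v)
            (1 * Real.cosh x + x * Real.sinh x - Real.cosh x) x := h1.sub (Real.hasDerivAt_sinh x)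
        convert h2 using 1
        ring
      rw [h.deriv]
      exact mul_pos hx (by rwa [Real.sinh_pos_iff])
  have h0 := key Set.self_mem_Ici (Set.mem_Ici.mpr hv.le) hv
  simp only [Real.sinh_zero, Real.cosh_zero, zero_mul, sub_zero] at h0
  linarith

/-- `sinh v / v` is strictly monotone on `(0, ∞)`. -/
lemma sinh_div_strictMono : StrictMonoOn (fun v : ℝ => Real.sinh v / v) (Set.Ioi 0) := by
  apply strictMonoOn_of_deriv_pos (convex_Ioi 0)
  · intro x hx
    exact (Real.continuous_sinh.continuousWithinAt).div continuousWithinAt_id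
      (ne_of_gt (Set.mem_Ioi.mp hx))
  · intro x hx
    rw [interior_Ioi, Set.mem_Ioi] at hx
    have h : HasDerivAt (fun v : ℝ => Real.sinh v / v)
        ((Real.cosh x * x - Real.sinh x * 1) / (x ^ 2)) x :=
      (Real.hasDerivAt_sinh x).div (hasDerivAt_id x) (ne_of_gt hx)
    rw [h.deriv]
    apply div_pos _ (by positivity)
    have := sinh_lt_mul_cosh hx
    nlinarith

noncomputable def gfun (w : ℝ) : ℝ := Real.cosh (Real.sqrt w)

lemma gfun_hasDeriv {w : ℝ} (hw : 0 < w) :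
    HasDerivAt gfun (Real.sinh (Real.sqrt w) * (1 / (2 * Real.sqrt w))) w := by
  have h1 : HasDerivAt Real.sqrt (1 / (2 * Real.sqrt w)) w := Real.hasDerivAt_sqrt (ne_of_gt hw)
  exact (Real.hasDerivAt_cosh (Real.sqrt w)).comp w h1

lemma gfun_strictConvexOn : StrictConvexOn ℝ (Set.Ici 0) gfun := by
  apply StrictMonoOn.strictConvexOn_of_deriv (convex_Ici 0)
  · exact Real.continuous_cosh.comp_continuousOn Real.continuous_sqrt.continuousOn
  · rw [interior_Ici]
    intro w1 h1 w2 h2 hlt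
    rw [Set.mem_Ioi] at h1 h2
    rw [(gfun_hasDeriv h1).deriv, (gfun_hasDeriv h2).deriv]
    have s1 : 0 < Real.sqrt w1 := Real.sqrt_pos.mpr h1
    have s2 : 0 < Real.sqrt w2 := Real.sqrt_pos.mpr h2
    have hs : Real.sqrt w1 < Real.sqrt w2 := Real.sqrt_lt_sqrt h1.le hlt
    have := sinh_div_strictMono (Set.mem_Ioi.mpr s1) (Set.mem_Ioi.mpr s2) hs
    simp only at this
    rw [div_lt_div_iff₀ s1 s2] at this
    rw [mul_one_div, mul_one_div, div_lt_div_iff₀ (by positivity) (by positivity)]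
    nlinarith


lemma gfun_mul_lt {w₁ w₂ : ℝ} (h1 : 0 < w₁) (h2 : 0 < w₂) :
    gfun (w₁ + w₂) < gfun w₁ * gfun w₂ := by
  set p := Real.sqrt w₁ with hp
  set q := Real.sqrt w₂ with hq
  have hp0 : 0 < p := Real.sqrt_pos.mpr h1
  have hq0 : 0 < q := Real.sqrt_pos.mpr h2
  have hxy : ((p + q) ^ 2 : ℝ) ≠ (p - q) ^ 2 := by nlinarith
  have hmx : ((p + q) ^ 2 : ℝ) ∈ Set.Ici (0:ℝ) := Set.mem_Ici.mpr (by positivity)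
  have hmy : ((p - q) ^ 2 : ℝ) ∈ Set.Ici (0:ℝ) := Set.mem_Ici.mpr (by positivity)
  have hc := gfun_strictConvexOn.2 hmx hmy hxy (by norm_num : (0:ℝ) < 1/2)
      (by norm_num : (0:ℝ) < 1/2) (by norm_num)
  have e1 : (1/2 : ℝ) • ((p + q) ^ 2) + (1/2 : ℝ) • ((p - q) ^ 2) = w₁ + w₂ := by
    have := Real.sq_sqrt h1.le
    have := Real.sq_sqrt h2.le
    simp only [smul_eq_mul]
    nlinarith
  rw [e1] at hc
  have e2 : gfun ((p + q) ^ 2) = Real.cosh (p + q) := by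
    unfold gfun; rw [Real.sqrt_sq (by positivity)]
  have e3 : gfun ((p - q) ^ 2) = Real.cosh (p - q) := by
    unfold gfun; rw [Real.sqrt_sq_eq_abs, Real.cosh_abs]
  rw [e2, e3] at hc
  have e4 : (1/2 : ℝ) • Real.cosh (p + q) + (1/2 : ℝ) • Real.cosh (p - q) =
      Real.cosh p * Real.cosh q := by
    rw [smul_eq_mul, smul_eq_mul, Real.cosh_add, Real.cosh_sub]; ring
  rw [e4] at hc
  exact hc

lemma gfun_zero : gfun 0 = 1 := by unfold gfun; simp

lemma gfun_mul {w₁ w₂ : ℝ} (h1 : 0 ≤ w₁) (h2 : 0 ≤ w₂) :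
    gfun (w₁ + w₂) ≤ gfun w₁ * gfun w₂ := by
  rcases eq_or_lt_of_le h1 with rfl | h1'
  · rw [gfun_zero, zero_add, one_mul]
  rcases eq_or_lt_of_le h2 with rfl | h2'
  · rw [gfun_zero, add_zero, mul_one]
  exact (gfun_mul_lt h1' h2').le


lemma gfun_sq_mul (v u : ℝ) : gfun ((v * u) ^ 2) = Real.cosh (v * u) := by
  unfold gfun; rw [Real.sqrt_sq_eq_abs, Real.cosh_abs]

lemma gfun_sq (u : ℝ) : gfun (u ^ 2) = Real.cosh u := by
  have := gfun_sq_mul 1 u; simpa using this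

lemma gfun_one_le (w : ℝ) : 1 ≤ gfun w := Real.one_le_cosh _

lemma gfun_pos (w : ℝ) : 0 < gfun w := lt_of_lt_of_le one_pos (gfun_one_le w)

lemma gfun_mono {w₁ w₂ : ℝ} (h1 : 0 ≤ w₁) (h12 : w₁ ≤ w₂) : gfun w₁ ≤ gfun w₂ := by
  unfold gfun
  rw [Real.cosh_le_cosh]
  rw [abs_of_nonneg (Real.sqrt_nonneg _), abs_of_nonneg (Real.sqrt_nonneg _)]
  exact Real.sqrt_le_sqrt h12

lemma gfun_le_cosh_pow (u : ℝ) (n : ℕ) : gfun (n * u ^ 2) ≤ Real.cosh u ^ n := by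
  induction n with
  | zero => simp [gfun_zero]
  | succ m ih =>
    have : ((m : ℝ) + 1) * u ^ 2 = m * u ^ 2 + u ^ 2 := by ring
    rw [Nat.cast_add, Nat.cast_one, this]
    calc gfun ((m : ℝ) * u ^ 2 + u ^ 2) ≤ gfun ((m : ℝ) * u ^ 2) * gfun (u ^ 2) :=
          gfun_mul (by positivity) (by positivity)
      _ ≤ Real.cosh u ^ m * Real.cosh u := by
          apply mul_le_mul_of_nonneg_right ih (gfun_pos _).le |>.trans
          rw [gfun_sq]
      _ = Real.cosh u ^ (m + 1) := by ring

lemma gfun_lt_cosh_pow {u : ℝ} (hu : u ≠ 0) {n : ℕ} (hn : 2 ≤ n) :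
    gfun (n * u ^ 2) < Real.cosh u ^ n := by
  obtain ⟨m, rfl⟩ : ∃ m, n = m + 1 := ⟨n - 1, by omega⟩
  have hm : 1 ≤ m := by omega
  have hu2 : (0:ℝ) < u ^ 2 := by positivity
  have hmu : (0:ℝ) < m * u ^ 2 := by
    apply mul_pos _ hu2; exact_mod_cast Nat.pos_of_ne_zero (by omega)
  have e : ((m + 1 : ℕ) : ℝ) * u ^ 2 = m * u ^ 2 + u ^ 2 := by push_cast; ring
  rw [e]
  calc gfun ((m : ℝ) * u ^ 2 + u ^ 2) < gfun ((m : ℝ) * u ^ 2) * gfun (u ^ 2) :=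
        gfun_mul_lt hmu hu2
    _ ≤ Real.cosh u ^ m * Real.cosh u := by
        rw [gfun_sq]
        exact mul_le_mul_of_nonneg_right (gfun_le_cosh_pow u m) (Real.cosh_pos u).le
    _ = Real.cosh u ^ (m + 1) := by ring

lemma sum_choose_real (a : ℕ) : ∑ k ∈ range (a+1), (a.choose k : ℝ) = 2 ^ a := by
  have := Nat.sum_range_choose a
  exact_mod_cast congrArg (fun n : ℕ => (n : ℝ)) this

lemma sum_choose_sq (a : ℕ) :
    ∑ k ∈ range (a+1), (a.choose k : ℝ) * (2*(k:ℝ) - a)^2 = (a:ℝ) * 2^a := by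
  induction a with
  | zero => simp
  | succ a ih =>
    set g : ℕ → ℝ := fun k => (2*(k:ℝ) - (a+1))^2 with hg
    have h1 : ∑ k ∈ range (a+2), ((a+1).choose k : ℝ) * g k
        = ∑ k ∈ range (a+1), ((a+1).choose (k+1) : ℝ) * g (k+1) + ((a+1).choose 0 : ℝ) * g 0 :=
      Finset.sum_range_succ' (fun k => ((a+1).choose k : ℝ) * g k) (a+1)
    have h2 : ∑ k ∈ range (a+2), (a.choose k : ℝ) * g k
        = ∑ k ∈ range (a+1), (a.choose (k+1) : ℝ) * g (k+1) + (a.choose 0 : ℝ) * g 0 :=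
      Finset.sum_range_succ' (fun k => (a.choose k : ℝ) * g k) (a+1)
    have h3 : ∑ k ∈ range (a+2), (a.choose k : ℝ) * g k
        = ∑ k ∈ range (a+1), (a.choose k : ℝ) * g k := by
      rw [Finset.sum_range_succ, Nat.choose_succ_self]
      simp
    have h4 : ∑ k ∈ range (a+1), (a.choose (k+1) : ℝ) * g (k+1)
        = ∑ k ∈ range (a+1), (a.choose k : ℝ) * g k - g 0 := by
      have := h2.symm.trans h3
      simp only [Nat.choose_zero_right, Nat.cast_one, one_mul] at this
      linarith
    have h5 : ∀ k, ((a+1).choose (k+1) : ℝ) = (a.choose k : ℝ) + (a.choose (k+1) : ℝ) := by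
      intro k
      have := Nat.choose_succ_succ a k
      exact_mod_cast congrArg (fun n : ℕ => (n : ℝ)) this
    have goal1 : ∑ k ∈ range (a+2), ((a+1).choose k : ℝ) * g k
        = ∑ k ∈ range (a+1), (a.choose k : ℝ) * (g (k+1) + g k) := by
      rw [h1]
      simp only [h5, add_mul]
      rw [Finset.sum_add_distrib, h4]
      simp only [Nat.choose_zero_right, Nat.cast_one, one_mul, mul_add]
      rw [Finset.sum_add_distrib]
      ring
    have hgk : ∀ k : ℕ, g (k+1) + g k = 2 * (2*(k:ℝ) - a)^2 + 2 := by
      intro k; simp only [hg]; push_cast; ring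
    have goal2 : ∑ k ∈ range (a+1), (a.choose k : ℝ) * (g (k+1) + g k)
        = 2 * (∑ k ∈ range (a+1), (a.choose k : ℝ) * (2*(k:ℝ) - a)^2)
          + 2 * ∑ k ∈ range (a+1), (a.choose k : ℝ) := by
      simp only [hgk, mul_add, Finset.mul_sum]
      rw [Finset.sum_add_distrib]
      congr 1
      · apply Finset.sum_congr rfl; intro k _; ring
      · apply Finset.sum_congr rfl; intro k _; ring
    have : ∑ k ∈ range (a+2), ((a+1).choose k : ℝ) * g k = 2 * (a * 2^a) + 2 * 2^a := by
      rw [goal1, goal2, ih, sum_choose_real]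
    rw [show a + 1 + 1 = a + 2 from rfl]
    simp only [hg] at this
    push_cast at this ⊢
    rw [this]
    ring

lemma sum_choose_exp (a : ℕ) (u : ℝ) :
    ∑ k ∈ range (a+1), (a.choose k : ℝ) * Real.exp ((2*(k:ℝ) - a) * u)
      = (Real.exp u + Real.exp (-u)) ^ a := by
  rw [add_pow]
  apply Finset.sum_congr rfl
  intro k hk
  rw [Finset.mem_range] at hk
  have hka : k ≤ a := by omega
  rw [← Real.exp_nat_mul, ← Real.exp_nat_mul, ← Real.exp_add]
  rw [Nat.cast_sub hka]
  rw [show (k:ℝ) * u + ((a:ℝ) - k) * -u = (2*(k:ℝ) - a) * u from by ring]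
  ring

lemma sum_choose_cosh (a : ℕ) (u : ℝ) :
    ∑ k ∈ range (a+1), (a.choose k : ℝ) * Real.cosh ((2*(k:ℝ) - a) * u)
      = (2 * Real.cosh u) ^ a := by
  have hrev : ∑ k ∈ range (a+1), (a.choose k : ℝ) * Real.exp (-((2*(k:ℝ) - a) * u))
      = (Real.exp u + Real.exp (-u)) ^ a := by
    rw [← sum_choose_exp a u]
    rw [← Finset.sum_range_reflect (fun k => (a.choose k : ℝ) * Real.exp ((2*(k:ℝ) - a) * u)) (a+1)]
    apply Finset.sum_congr rfl
    intro j hj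
    rw [Finset.mem_range] at hj
    have hja : j ≤ a := by omega
    rw [show a + 1 - 1 - j = a - j from by omega, Nat.choose_symm hja, Nat.cast_sub hja]
    congr 2
    ring
  have : ∑ k ∈ range (a+1), (a.choose k : ℝ) * Real.cosh ((2*(k:ℝ) - a) * u)
      = (∑ k ∈ range (a+1), (a.choose k : ℝ) * Real.exp ((2*(k:ℝ) - a) * u)
        + ∑ k ∈ range (a+1), (a.choose k : ℝ) * Real.exp (-((2*(k:ℝ) - a) * u))) / 2 := by
    rw [← Finset.sum_add_distrib]
    rw [Finset.sum_div]
    apply Finset.sum_congr rfl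
    intro k _
    rw [Real.cosh_eq]
    ring
  rw [this, sum_choose_exp, hrev]
  rw [Real.cosh_eq]
  ring


lemma two_mul_le_two_pow {a : ℕ} (ha : 2 ≤ a) : 2 * a ≤ 2 ^ a := by
  induction a with
  | zero => omega
  | succ m ih =>
    rcases Nat.lt_or_ge m 2 with hm | hm
    · interval_cases m <;> simp_all
    · have h1 := ih hm
      have h2 : 2 ≤ 2 ^ m := by omega
      have e : 2 ^ (m+1) = 2 * 2^m := by ring
      omega

lemma sq_add_two_le {a : ℕ} (ha : 2 ≤ a) : a ^ 2 + 2 ≤ 2 ^ a + a := by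
  induction a with
  | zero => omega
  | succ m ih =>
    rcases Nat.lt_or_ge m 2 with hm | hm
    · interval_cases m <;> norm_num
    · have h1 := ih hm
      have h2 := two_mul_le_two_pow hm
      have e1 : (m + 1) ^ 2 = m ^ 2 + 2 * m + 1 := by ring
      have e2 : 2 ^ (m + 1) = 2 * 2 ^ m := by ring
      omega

/-- The core hyperbolic inequality. -/
lemma core_cosh {u : ℝ} (hu : u ≠ 0) {a n d : ℕ} (ha : 2 ≤ a) (hn : a + d ≤ n)
    (hd : d * (d - 1) + 2 ≤ 2 * a) :
    ((2:ℝ)^a - 2) * Real.cosh (d * u) <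
      ((2 * Real.cosh u) ^ a - 2 * Real.cosh (a * u)) * Real.cosh u ^ n := by
  obtain ⟨m, rfl⟩ : ∃ m, a = m + 2 := ⟨a - 2, by omega⟩
  set Smid : ℝ := ∑ k ∈ range (m + 1), (((m+2).choose (k+1)) : ℝ)
      * Real.cosh ((2*((k:ℝ)+1) - ((m+2:ℕ):ℝ)) * u) with hSmid
  -- split identity
  have hsplit : (2 * Real.cosh u) ^ (m+2) = Smid + 2 * Real.cosh (((m+2:ℕ):ℝ) * u) := by
    have h := sum_choose_cosh (m+2) u
    rw [show (m+2) + 1 = (m+1) + 1 + 1 from rfl] at h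
    rw [Finset.sum_range_succ] at h
    rw [Finset.sum_range_succ'
      (fun k => (((m+2).choose k) : ℝ) * Real.cosh ((2*(k:ℝ) - ((m+2:ℕ):ℝ)) * u)) (m+1)] at h
    have e1 : (((m+2).choose (m+1+1)) : ℝ)
        * Real.cosh ((2*(((m+1+1:ℕ)):ℝ) - ((m+2:ℕ):ℝ)) * u) = Real.cosh (((m+2:ℕ):ℝ) * u) := by
      rw [show m+1+1 = m+2 from rfl, Nat.choose_self, Nat.cast_one, one_mul]
      congr 1
      push_cast
      ring
    have e2 : (((m+2).choose 0) : ℝ)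
        * Real.cosh ((2*(((0:ℕ)):ℝ) - ((m+2:ℕ):ℝ)) * u) = Real.cosh (((m+2:ℕ):ℝ) * u) := by
      rw [Nat.choose_zero_right, Nat.cast_one, one_mul]
      rw [show (2*(((0:ℕ)):ℝ) - ((m+2:ℕ):ℝ)) * u = -(((m+2:ℕ):ℝ) * u) from by push_cast; ring]
      exact Real.cosh_neg _
    rw [e1, e2] at h
    have hmid : ∑ k ∈ range (m+1),
        (fun k => (((m+2).choose k) : ℝ) * Real.cosh ((2*(k:ℝ) - ((m+2:ℕ):ℝ)) * u)) (k+1)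
        = Smid := by
      apply Finset.sum_congr rfl
      intro k _
      push_cast
      ring_nf
    rw [hmid] at h
    linarith
  -- weight sums
  have hw1 : ∑ k ∈ range (m + 1), (((m+2).choose (k+1)) : ℝ) = 2 ^ (m+2) - 2 := by
    have h := sum_choose_real (m+2)
    rw [show (m+2) + 1 = (m+1) + 1 + 1 from rfl, Finset.sum_range_succ,
      Finset.sum_range_succ' (fun k => (((m+2).choose k) : ℝ)) (m+1)] at h
    rw [show m+1+1 = m+2 from rfl, Nat.choose_self, Nat.choose_zero_right] at h
    push_cast at h
    linarith
  have hw2 : ∑ k ∈ range (m + 1), (((m+2).choose (k+1)) : ℝ) * (2*((k:ℝ)+1) - ((m+2:ℕ):ℝ))^2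
      = ((m+2:ℕ):ℝ) * 2^(m+2) - 2*((m+2:ℕ):ℝ)^2 := by
    have h := sum_choose_sq (m+2)
    rw [show (m+2) + 1 = (m+1) + 1 + 1 from rfl, Finset.sum_range_succ,
      Finset.sum_range_succ' (fun k => (((m+2).choose k) : ℝ) * (2*(k:ℝ) - ((m+2:ℕ):ℝ))^2)
        (m+1)] at h
    rw [show m+1+1 = m+2 from rfl, Nat.choose_self, Nat.choose_zero_right] at h
    have hmid : ∑ k ∈ range (m+1),
        (fun k => (((m+2).choose k) : ℝ) * (2*(k:ℝ) - ((m+2:ℕ):ℝ))^2) (k+1)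
        = ∑ k ∈ range (m + 1), (((m+2).choose (k+1)) : ℝ) * (2*((k:ℝ)+1) - ((m+2:ℕ):ℝ))^2 := by
      apply Finset.sum_congr rfl
      intro k _
      simp only
      push_cast
      ring
    rw [hmid] at h
    have ea : (2*(((m+1+1:ℕ)):ℝ) - ((m+2:ℕ):ℝ))^2 = ((m+2:ℕ):ℝ)^2 := by push_cast; ring
    have eb : (2*(((0:ℕ)):ℝ) - ((m+2:ℕ):ℝ))^2 = ((m+2:ℕ):ℝ)^2 := by push_cast; ring
    rw [ea, eb] at h
    push_cast at h ⊢
    linarith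
  have hpow : (4:ℝ) ≤ 2 ^ (m+2) := by
    calc (4:ℝ) = 2^2 := by norm_num
    _ ≤ 2^(m+2) := by
        apply pow_le_pow_right₀ (by norm_num)
        omega
  have hden : (0:ℝ) < 2^(m+2) - 2 := by linarith
  -- Jensen
  set W : ℝ := (((m+2:ℕ):ℝ) * 2^(m+2) - 2*((m+2:ℕ):ℝ)^2) / (2^(m+2) - 2) with hW
  have hacast : ((m+2:ℕ):ℝ) = (m:ℝ) + 2 := by push_cast; ring
  have hWnn : 0 ≤ W := by
    apply div_nonneg _ hden.le
    have h2a := two_mul_le_two_pow (show 2 ≤ m+2 by omega)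
    have hc : 2 * ((m+2:ℕ):ℝ) ≤ 2^(m+2) := by exact_mod_cast h2a
    have hapos : (0:ℝ) < ((m+2:ℕ):ℝ) := by rw [hacast]; positivity
    nlinarith
  have hjensen : (2^(m+2) - 2) * gfun (W * u^2) ≤ Smid := by
    have hmap := (gfun_strictConvexOn.convexOn).map_sum_le
      (t := range (m+1))
      (w := fun k => (((m+2).choose (k+1)) : ℝ) / (2^(m+2) - 2))
      (p := fun k => ((2*((k:ℝ)+1) - ((m+2:ℕ):ℝ)) * u)^2)
      (fun i _ => by positivity)
      (by rw [← Finset.sum_div, hw1]; field_simp)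
      (fun i _ => Set.mem_Ici.mpr (by positivity))
    simp only [smul_eq_mul] at hmap
    have e1 : ∑ i ∈ range (m+1), ((((m+2).choose (i+1)) : ℝ) / (2^(m+2) - 2))
        * ((2*((i:ℝ)+1) - ((m+2:ℕ):ℝ)) * u)^2 = W * u^2 := by
      have hpt : ∀ i ∈ range (m+1), ((((m+2).choose (i+1)) : ℝ) / (2^(m+2) - 2))
          * ((2*((i:ℝ)+1) - ((m+2:ℕ):ℝ)) * u)^2
          = ((((m+2).choose (i+1)) : ℝ) * (2*((i:ℝ)+1) - ((m+2:ℕ):ℝ))^2)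
            * (u^2 / (2^(m+2) - 2)) := fun i _ => by ring
      rw [Finset.sum_congr rfl hpt, ← Finset.sum_mul, hw2, hW]
      try field_simp
      try ring
    have e2 : ∑ i ∈ range (m+1), ((((m+2).choose (i+1)) : ℝ) / (2^(m+2) - 2))
        * gfun (((2*((i:ℝ)+1) - ((m+2:ℕ):ℝ)) * u)^2) = Smid / (2^(m+2) - 2) := by
      rw [hSmid, Finset.sum_div]
      apply Finset.sum_congr rfl
      intro k _
      rw [gfun_sq_mul]
      ring
    rw [e1, e2] at hmap
    rw [mul_comm]
    exact (le_div_iff₀ hden).mp hmap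
  -- exponent comparison
  have hdsq : (d:ℝ)^2 ≤ W + n := by
    have hdd : d * d + 2 ≤ d + 2 * (m+2) := by
      rcases d with _ | e
      · omega
      · have h1 : (e+1) * ((e+1) - 1) = (e+1) * e := by simp
        rw [h1] at hd
        have h2 : (e+1) * (e+1) = (e+1) * e + (e + 1) := by ring
        omega
    have hWge : ((m+2:ℕ):ℝ) - 2 ≤ W := by
      rw [hW, le_div_iff₀ hden]
      have h := sq_add_two_le (show 2 ≤ m+2 by omega)
      have hc : ((m+2:ℕ):ℝ)^2 + 2 ≤ 2^(m+2) + ((m+2:ℕ):ℝ) := by exact_mod_cast h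
      nlinarith
    have hc2 : (d:ℝ) * d + 2 ≤ (d:ℝ) + 2 * ((m+2:ℕ):ℝ) := by exact_mod_cast hdd
    have hc3 : ((m+2:ℕ):ℝ) + d ≤ n := by exact_mod_cast hn
    nlinarith
  -- chain
  have hstep1 : ((2:ℝ)^(m+2) - 2) * Real.cosh (d * u)
      ≤ ((2:ℝ)^(m+2) - 2) * (gfun (W * u^2) * gfun ((n:ℝ) * u^2)) := by
    apply mul_le_mul_of_nonneg_left _ hden.le
    rw [← gfun_sq_mul (d:ℝ) u]
    calc gfun (((d:ℝ) * u)^2) ≤ gfun (W * u^2 + (n:ℝ) * u^2) := by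
          apply gfun_mono (by positivity)
          rw [show ((d:ℝ) * u)^2 = (d:ℝ)^2 * u^2 from by ring, ← add_mul]
          exact mul_le_mul_of_nonneg_right hdsq (by positivity)
      _ ≤ gfun (W * u^2) * gfun ((n:ℝ) * u^2) :=
          gfun_mul (by positivity) (by positivity)
  have hstep2 : ((2:ℝ)^(m+2) - 2) * (gfun (W * u^2) * gfun ((n:ℝ) * u^2))
      < ((2:ℝ)^(m+2) - 2) * (gfun (W * u^2) * Real.cosh u ^ n) := by
    apply mul_lt_mul_of_pos_left _ hden
    apply mul_lt_mul_of_pos_left _ (gfun_pos _)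
    exact gfun_lt_cosh_pow hu (by omega)
  have hstep3 : ((2:ℝ)^(m+2) - 2) * (gfun (W * u^2) * Real.cosh u ^ n)
      ≤ Smid * Real.cosh u ^ n := by
    rw [← mul_assoc]
    exact mul_le_mul_of_nonneg_right hjensen (by positivity)
  have hfin : ((2 * Real.cosh u) ^ (m+2) - 2 * Real.cosh (((m+2:ℕ):ℝ) * u)) = Smid := by
    rw [hsplit]; ring
  rw [hfin]
  linarith

lemma twice_choose_two (d : ℕ) : 2 * d.choose 2 = d * (d - 1) := by
  rcases d with _ | e
  · rfl
  · rw [Nat.choose_two_right]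
    have h1 : (e+1) * ((e+1) - 1) = e * (e+1) := by
      simp [Nat.mul_comm]
    rw [h1]
    exact Nat.mul_div_cancel' (Nat.even_mul_succ_self e).two_dvd

/-- For distinct positive reals `x ≠ y` and integers `b ≥ t ≥ s ≥ a ≥ 2` with
`C(b−a,2) < a`, one has `μ_a · φ_{s,t} > ω_a · ψ_{s,t}`. -/
theorem mu_phi_gt_omega_psi (x y : ℝ) (hx : 0 < x) (hy : 0 < y) (hxy : x ≠ y)
    (a b s t : ℕ) (ha : 2 ≤ a) (has : a ≤ s) (hst : s ≤ t) (htb : t ≤ b)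
    (hab : Nat.choose (b - a) 2 < a) :
    ((x + y) ^ a - x ^ a - y ^ a) *
      (2 * ((x + y) / 2) ^ (s + t) - x ^ s * y ^ t - x ^ t * y ^ s) >
    (x ^ a + y ^ a - 2 * ((x + y) / 2) ^ a) * (x ^ s * y ^ t + x ^ t * y ^ s) := by
  set u : ℝ := (Real.log x - Real.log y) / 2 with hu_def
  set G : ℝ := Real.exp ((Real.log x + Real.log y) / 2) with hG_def
  have hG : 0 < G := Real.exp_pos _
  have hxG : x = G * Real.exp u := by
    rw [hG_def, hu_def, ← Real.exp_add,
      show (Real.log x + Real.log y) / 2 + (Real.log x - Real.log y) / 2 = Real.log x by ring,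
      Real.exp_log hx]
  have hyG : y = G * Real.exp (-u) := by
    rw [hG_def, hu_def, ← Real.exp_add,
      show (Real.log x + Real.log y) / 2 + -((Real.log x - Real.log y) / 2) = Real.log y by ring,
      Real.exp_log hy]
  have hu : u ≠ 0 := by
    intro h
    apply hxy
    have : Real.log x = Real.log y := by
      rw [hu_def] at h
      linarith [h]
    rw [← Real.exp_log hx, this, Real.exp_log hy]
  clear hu_def hG_def
  clear_value u G
  -- integer bookkeeping
  set d : ℕ := t - s with hd_def
  set n : ℕ := s + t - a with hn_def
  have hstn : s + t = a + n := by omega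
  have hnd : a + d ≤ n := by omega
  have hdineq : d * (d - 1) + 2 ≤ 2 * a := by
    have h1 : d ≤ b - a := by omega
    have h2 : d.choose 2 ≤ (b - a).choose 2 := Nat.choose_le_choose 2 h1
    have h3 : 2 * d.choose 2 = d * (d - 1) := twice_choose_two d
    omega
  set C : ℝ := Real.cosh u with hC_def
  set A : ℝ := Real.cosh ((a:ℝ) * u) with hA_def
  set D : ℝ := Real.cosh ((d:ℝ) * u) with hD_def
  have hC : 0 < C := Real.cosh_pos u
  -- substitution identities
  have hsum : x + y = G * (2 * C) := by
    rw [hxG, hyG, hC_def, Real.cosh_eq]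
    ring
  have hhalf : (x + y) / 2 = G * C := by rw [hsum]; ring
  have hE3 : x ^ a + y ^ a = G ^ a * (2 * A) := by
    rw [hxG, hyG, mul_pow, mul_pow, ← Real.exp_nat_mul, ← Real.exp_nat_mul, mul_neg,
      hA_def, Real.cosh_eq]
    ring
  have hterm1 : x ^ s * y ^ t = G ^ (a + n) * Real.exp (-((d:ℝ) * u)) := by
    have hds : ((d:ℕ):ℝ) = (t:ℝ) - (s:ℝ) := by
      rw [hd_def]
      push_cast [Nat.cast_sub hst]
      ring
    calc x ^ s * y ^ t = (G ^ s * G ^ t) * (Real.exp ((s:ℝ) * u) * Real.exp ((t:ℝ) * -u)) := by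
          rw [hxG, hyG, mul_pow, mul_pow, ← Real.exp_nat_mul, ← Real.exp_nat_mul]
          ring
      _ = G ^ (s + t) * Real.exp ((s:ℝ) * u + (t:ℝ) * -u) := by
          rw [← Real.exp_add, pow_add]
      _ = G ^ (a + n) * Real.exp (-((d:ℝ) * u)) := by
          rw [← hstn, show (s:ℝ) * u + (t:ℝ) * -u = -(((t:ℝ) - (s:ℝ)) * u) from by ring, ← hds]
  have hterm2 : x ^ t * y ^ s = G ^ (a + n) * Real.exp ((d:ℝ) * u) := by
    have hds : ((d:ℕ):ℝ) = (t:ℝ) - (s:ℝ) := by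
      rw [hd_def]
      push_cast [Nat.cast_sub hst]
      ring
    calc x ^ t * y ^ s = (G ^ t * G ^ s) * (Real.exp ((t:ℝ) * u) * Real.exp ((s:ℝ) * -u)) := by
          rw [hxG, hyG, mul_pow, mul_pow, ← Real.exp_nat_mul, ← Real.exp_nat_mul]
          ring
      _ = G ^ (t + s) * Real.exp ((t:ℝ) * u + (s:ℝ) * -u) := by
          rw [← Real.exp_add, pow_add]
      _ = G ^ (a + n) * Real.exp ((d:ℝ) * u) := by
          rw [show t + s = a + n from by omega,
            show (t:ℝ) * u + (s:ℝ) * -u = ((t:ℝ) - (s:ℝ)) * u from by ring, ← hds]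
  have hpsi : x ^ s * y ^ t + x ^ t * y ^ s = G ^ (a + n) * (2 * D) := by
    rw [hterm1, hterm2, hD_def, Real.cosh_eq]
    ring
  -- rewrite the goal
  have hmu : (x + y) ^ a - x ^ a - y ^ a = (G * (2 * C)) ^ a - G ^ a * (2 * A) := by
    rw [hsum]
    linear_combination -hE3
  have hphi : 2 * ((x + y) / 2) ^ (s + t) - x ^ s * y ^ t - x ^ t * y ^ s
      = 2 * (G * C) ^ (a + n) - G ^ (a + n) * (2 * D) := by
    rw [hhalf, hstn]
    linear_combination -hpsi
  have hom : x ^ a + y ^ a - 2 * ((x + y) / 2) ^ a = G ^ a * (2 * A) - 2 * (G * C) ^ a := by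
    rw [hhalf]
    linear_combination hE3
  rw [gt_iff_lt, hmu, hphi, hom, hpsi]
  -- core inequality
  have hcore := core_cosh hu ha hnd hdineq
  rw [← hC_def, ← hA_def, ← hD_def] at hcore
  have hcore' : 0 < ((2 * C) ^ a - 2 * A) * C ^ n - ((2:ℝ)^a - 2) * D := by linarith
  have key : ((G * (2 * C)) ^ a - G ^ a * (2 * A)) * (2 * (G * C) ^ (a + n) - G ^ (a + n) * (2 * D))
      - (G ^ a * (2 * A) - 2 * (G * C) ^ a) * (G ^ (a + n) * (2 * D))
      = 2 * (G ^ a * G ^ (a + n) * C ^ a)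
        * (((2 * C) ^ a - 2 * A) * C ^ n - ((2:ℝ)^a - 2) * D) := by
    ring
  have hpos : 0 < 2 * (G ^ a * G ^ (a + n) * C ^ a) := by positivity
  nlinarith [mul_pos hpos hcore', key]
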